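/- Let M be a Hausdorff, finite-dimensional smooth manifold without boundary modeled on ℝ^d (a C² manifold suffices), let N ∈ ℕ, and let V : Fin N → (Π x : M, TangentSpace (𝓡 d) x) be vector fields that are C¹ as sections of the tangent bundle. Let K ⊆ M be compact. Then there exists δ₀ > 0 such that for every θ : Fin N → ℝ with ∑ i, (θ i)² = 1, every x ∈ K with ∑ i, θ i • V i x ≠ 0, every r ∈ (0, δ₀], and every curve γ : ℝ → M with γ 0 = x and IsIntegralCurveOn γ (fun y => ∑ i, (r * θ i) • V i y) (Set.Icc (0 : ℝ) 1), one has γ 1 ≠ x; that is, e^{rθ₁V₁ + ⋯ + rθ_N V_N} x ≠ x whenever this flow is defined. -/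

import Mathlib

open scoped Manifold
open Set


open scoped Manifold RealInnerProductSpace
open Set

lemma exp_sub_one_le_mul (x : ℝ) : Real.exp x - 1 ≤ x * Real.exp x := by
  have h := Real.add_one_le_exp (-x)
  rw [Real.exp_neg] at h
  have h2 : (1 - x) * Real.exp x ≤ 1 := by
    have := Real.exp_pos x
    calc (1 - x) * Real.exp x ≤ (Real.exp x)⁻¹ * Real.exp x := by
          apply mul_le_mul_of_nonneg_right _ this.le
          linarith
      _ = 1 := inv_mul_cancel₀ this.ne'
  nlinarith [Real.exp_pos x]

section

variable {E : Type*} [NormedAddCommGroup E] [NormedSpace ℝ E]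
  {H : Type*} [TopologicalSpace H] {I : ModelWithCorners ℝ E H}
  {M : Type*} [TopologicalSpace M] [ChartedSpace H M] [IsManifold I (⊤ : ℕ∞) M]

lemma IsIntegralCurveOn.hasDerivAt_center {γ : ℝ → M} {v : (x : M) → TangentSpace I x}
    {s : Set ℝ} (hγ : ∀ t ∈ s, HasMFDerivAt 𝓘(ℝ, ℝ) I γ t ((1 : ℝ →L[ℝ] ℝ).smulRight (v (γ t)))) {t : ℝ} (ht : t ∈ s) (x₀ : M)
    (hsrc : γ t ∈ (extChartAt I x₀).source) :
    HasDerivAt ((extChartAt I x₀) ∘ γ)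
      (tangentCoordChange I (γ t) x₀ (γ t) (v (γ t))) t := by
  have hsrc := extChartAt_source I x₀ ▸ hsrc
  rw [hasDerivAt_iff_hasFDerivAt]
  have key := (HasMFDerivAt.comp t (hasMFDerivAt_extChartAt (I := I) hsrc) (hγ _ ht))
  rw [mfderiv_chartAt_eq_tangentCoordChange hsrc] at key
  rw [hasMFDerivAt_iff_hasFDerivAt] at key
  refine key.congr_fderiv ?_
  ext
  exact (tangentCoordChange I (γ t) x₀ (γ t)).map_smul (1:ℝ) (v (γ t))

end

lemma aux_gronwall_le (Kk eps t : ℝ) (hK : 0 < Kk) (h8 : Kk * t ≤ 1/8)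
    (ht0 : 0 ≤ t) (ht1 : t ≤ 1) (heps : 0 ≤ eps) :
    gronwallBound 0 Kk eps t ≤ 3 * eps := by
  rw [gronwallBound_of_K_ne_0 hK.ne']
  have hKt0 : 0 ≤ Kk * t := mul_nonneg hK.le ht0
  have hexp : Real.exp (Kk * t) - 1 ≤ 3 * (Kk * t) := by
    have h3 := exp_sub_one_le_mul (Kk * t)
    have h4 : Real.exp (Kk * t) ≤ Real.exp 1 := Real.exp_le_exp.mpr (by linarith)
    have h5 : Real.exp 1 < 2.7182818286 := Real.exp_one_lt_d9
    nlinarith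
  have h7 : eps / Kk * (Real.exp (Kk * t) - 1) ≤ eps / Kk * (3 * (Kk * t)) := by
    apply mul_le_mul_of_nonneg_left hexp
    positivity
  have h8' : eps / Kk * (3 * (Kk * t)) = 3 * eps * t := by
    field_simp
  have h9 : 3 * eps * t ≤ 3 * eps := by nlinarith
  have hexp0 : 0 ≤ Real.exp (Kk * t) := (Real.exp_pos _).le
  calc 0 * Real.exp (Kk * t) + eps / Kk * (Real.exp (Kk * t) - 1)
      = eps / Kk * (Real.exp (Kk * t) - 1) := by ring
    _ ≤ eps / Kk * (3 * (Kk * t)) := h7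
    _ = 3 * eps * t := h8'
    _ ≤ 3 * eps := h9

set_option maxHeartbeats 2000000 in
lemma local_no_return
    (d : ℕ) (M : Type*) [TopologicalSpace M] [T2Space M]
    [ChartedSpace (EuclideanSpace ℝ (Fin d)) M]
    [IsManifold (𝓡 d) (⊤ : ℕ∞) M]
    (N : ℕ) (V : Fin N → (Π x : M, TangentSpace (𝓡 d) x))
    (hV : ∀ i, ContMDiff (𝓡 d) (𝓡 d).tangent 1
      (fun x => (⟨x, V i x⟩ : TangentBundle (𝓡 d) M)))
    (x₀ : M) :
    ∃ u : Set M, IsOpen u ∧ x₀ ∈ u ∧ ∃ δ : ℝ, 0 < δ ∧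
      ∀ θ : Fin N → ℝ, (∑ i, (θ i) ^ 2) = 1 →
        ∀ x ∈ u, (∑ i, θ i • V i x) ≠ 0 →
          ∀ r ∈ Set.Ioc (0 : ℝ) δ,
            ∀ γ : ℝ → M, γ 0 = x →
              (∀ t ∈ Set.Icc (0 : ℝ) 1, HasMFDerivAt 𝓘(ℝ, ℝ) (𝓡 d) γ t
                ((1 : ℝ →L[ℝ] ℝ).smulRight <| (fun y => ∑ i, (r * θ i) • V i y) (γ t))) →
              γ 1 ≠ x := by
  set f := extChartAt (𝓡 d) x₀ with hf
  set Z : Fin N → EuclideanSpace ℝ (Fin d) → EuclideanSpace ℝ (Fin d) := fun i u =>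
    tangentCoordChange (𝓡 d) (f.symm u) x₀ (f.symm u) (V i (f.symm u)) with hZ
  have hZlip : ∀ i : Fin N, ∃ K : NNReal, ∃ s ∈ nhds (f x₀), LipschitzOnWith K (Z i) s := by
    intro i
    have hv := (hV i).contMDiffAt (x := x₀)
    rw [contMDiffAt_iff] at hv
    obtain ⟨_, hv⟩ := hv
    obtain ⟨K, s, hs, hl⟩ : ∃ K, ∃ s ∈ nhds _, LipschitzOnWith K (Z i) s :=
      (hv.contDiffAt (range_mem_nhds_isInteriorPoint
        (BoundarylessManifold.isInteriorPoint (x := x₀)))).snd.exists_lipschitzOnWith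
    exact ⟨K, s, hs, hl⟩
  choose K sZ hsZ hlip using hZlip
  -- choose a closed ball inside all Lipschitz sets and the chart target
  have htgt : f.target ∈ nhds (f x₀) :=
    extChartAt_target_mem_nhds' (mem_extChartAt_target (I := 𝓡 d) x₀)
  have hnhds : ((⋂ i, sZ i) ∩ f.target) ∈ nhds (f x₀) :=
    Filter.inter_mem (Filter.iInter_mem.mpr hsZ) htgt
  obtain ⟨ρ, hρ0, hρ⟩ := Metric.nhds_basis_closedBall.mem_iff.mp hnhds
  have hρtgt : Metric.closedBall (f x₀) ρ ⊆ f.target := fun y hy => (hρ hy).2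
  have hρs : ∀ i, Metric.closedBall (f x₀) ρ ⊆ sZ i := fun i y hy =>
    mem_iInter.mp (hρ hy).1 i
  set L : ℝ := 1 + ∑ i, (K i : ℝ) with hL
  set C : ℝ := 1 + ∑ i, (‖Z i (f x₀)‖ + (K i : ℝ) * ρ) with hC
  have hL0 : 0 < L := by
    have : (0:ℝ) ≤ ∑ i, (K i : ℝ) := Finset.sum_nonneg fun i _ => (K i).coe_nonneg
    linarith
  have hC0 : 0 < C := by
    have : (0:ℝ) ≤ ∑ i, (‖Z i (f x₀)‖ + (K i : ℝ) * ρ) := Finset.sum_nonneg fun i _ =>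
      add_nonneg (norm_nonneg _) (mul_nonneg (K i).coe_nonneg hρ0.le)
    linarith
  have hKL : ∀ i, (K i : ℝ) ≤ L := by
    intro i
    have h1 : (K i : ℝ) ≤ ∑ j, (K j : ℝ) :=
      Finset.single_le_sum (fun j _ => (K j).coe_nonneg) (Finset.mem_univ i)
    linarith
  -- bound for each Z i on the closed ball
  have hZbdd : ∀ i, ∀ u' ∈ Metric.closedBall (f x₀) ρ, ‖Z i u'‖ ≤ ‖Z i (f x₀)‖ + (K i : ℝ) * ρ := by
    intro i u' hu'
    have hx₀b : f x₀ ∈ Metric.closedBall (f x₀) ρ := Metric.mem_closedBall_self hρ0.le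
    have := ((hlip i).dist_le_mul u' (hρs i hu') (f x₀) (hρs i hx₀b))
    have hd : dist u' (f x₀) ≤ ρ := Metric.mem_closedBall.mp hu'
    have h2 : dist (Z i u') (Z i (f x₀)) ≤ (K i : ℝ) * ρ :=
      this.trans (by exact mul_le_mul_of_nonneg_left hd (K i).coe_nonneg)
    calc ‖Z i u'‖ ≤ ‖Z i (f x₀)‖ + ‖Z i u' - Z i (f x₀)‖ := by
          have := norm_add_le (Z i (f x₀)) (Z i u' - Z i (f x₀)); simpa using this
      _ ≤ ‖Z i (f x₀)‖ + (K i : ℝ) * ρ := by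
          rw [← dist_eq_norm] at *; linarith
  -- the open neighbourhood and the uniform bound
  refine ⟨f.source ∩ f ⁻¹' Metric.ball (f x₀) (ρ/2),
    (continuousOn_extChartAt (I := 𝓡 d) x₀).isOpen_inter_preimage
      (isOpen_extChartAt_source x₀) Metric.isOpen_ball,
    ⟨mem_extChartAt_source x₀, by simpa using half_pos hρ0⟩,
    min (ρ/(4*C)) (1/(8*L)), lt_min (by positivity) (by positivity), ?_⟩
  rintro θ hθ x ⟨hxsrc, hxball⟩ hWx r ⟨hr0, hrδ⟩ γ hγ0 hγ
  have hxball : f x ∈ Metric.ball (f x₀) (ρ/2) := hxball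
  have hrC : r * C ≤ ρ/4 := by
    have h1 : r ≤ ρ/(4*C) := hrδ.trans (min_le_left _ _)
    calc r * C ≤ (ρ/(4*C)) * C := mul_le_mul_of_nonneg_right h1 hC0.le
      _ = ρ/4 := by field_simp
  have hrL : r * L ≤ 1/8 := by
    have h1 : r ≤ 1/(8*L) := hrδ.trans (min_le_right _ _)
    calc r * L ≤ (1/(8*L)) * L := mul_le_mul_of_nonneg_right h1 hL0.le
      _ = 1/8 := by field_simp
  have hθ1 : ∀ i, |θ i| ≤ 1 := by
    intro i
    apply (sq_le_one_iff_abs_le_one (θ i)).mp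
    nlinarith [Finset.single_le_sum (fun j (_ : j ∈ Finset.univ) => sq_nonneg (θ j))
      (Finset.mem_univ i), hθ]
  -- combined vector field in chart
  set Zθ : EuclideanSpace ℝ (Fin d) → EuclideanSpace ℝ (Fin d) :=
    fun u' => ∑ i, θ i • Z i u' with hZθ
  have hZθbdd : ∀ u' ∈ Metric.closedBall (f x₀) ρ, ‖Zθ u'‖ ≤ C := by
    intro u' hu'
    calc ‖Zθ u'‖ ≤ ∑ i, ‖θ i • Z i u'‖ := norm_sum_le _ _
      _ ≤ ∑ i, (‖Z i (f x₀)‖ + (K i : ℝ) * ρ) := by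
          apply Finset.sum_le_sum
          intro i _
          rw [norm_smul]
          calc ‖θ i‖ * ‖Z i u'‖ ≤ 1 * ‖Z i u'‖ :=
                mul_le_mul_of_nonneg_right (by simpa using hθ1 i) (norm_nonneg _)
            _ = ‖Z i u'‖ := one_mul _
            _ ≤ _ := hZbdd i u' hu'
      _ ≤ C := by rw [hC]; linarith
  have hZθlip : ∀ u' ∈ Metric.closedBall (f x₀) ρ, ∀ u'' ∈ Metric.closedBall (f x₀) ρ,
      ‖Zθ u' - Zθ u''‖ ≤ L * ‖u' - u''‖ := by
    intro u' hu' u'' hu''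
    have : Zθ u' - Zθ u'' = ∑ i, θ i • (Z i u' - Z i u'') := by
      rw [hZθ, ← Finset.sum_sub_distrib]
      exact Finset.sum_congr rfl fun i _ => (smul_sub _ _ _).symm
    rw [this]
    calc ‖∑ i, θ i • (Z i u' - Z i u'')‖ ≤ ∑ i, ‖θ i • (Z i u' - Z i u'')‖ := norm_sum_le _ _
      _ ≤ ∑ i, (K i : ℝ) * ‖u' - u''‖ := by
          apply Finset.sum_le_sum
          intro i _
          rw [norm_smul]
          have h2 : ‖Z i u' - Z i u''‖ ≤ (K i : ℝ) * ‖u' - u''‖ := by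
            have := (hlip i).dist_le_mul u' (hρs i hu') u'' (hρs i hu'')
            rw [dist_eq_norm, dist_eq_norm] at this
            exact this
          calc ‖θ i‖ * ‖Z i u' - Z i u''‖ ≤ 1 * ‖Z i u' - Z i u''‖ :=
                mul_le_mul_of_nonneg_right (by simpa using hθ1 i) (norm_nonneg _)
            _ = _ := one_mul _
            _ ≤ _ := h2
      _ ≤ L * ‖u' - u''‖ := by
          rw [← Finset.sum_mul]
          apply mul_le_mul_of_nonneg_right _ (norm_nonneg _)
          rw [hL]; linarith
  -- derivative of the curve read in the chart at x₀
  have h1' : ∀ t ∈ Icc (0:ℝ) 1, γ t ∈ f.source →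
      HasDerivAt (f ∘ γ) (r • Zθ (f (γ t))) t := by
    intro t ht hsrc
    have h := IsIntegralCurveOn.hasDerivAt_center (v := fun y => ∑ i, (r * θ i) • V i y) hγ ht x₀ hsrc
    refine h.congr_deriv ?_
    symm
    have hli : f.symm (f (γ t)) = γ t := f.left_inv hsrc
    have hZeq : ∀ i, Z i (f (γ t)) = tangentCoordChange (𝓡 d) (γ t) x₀ (γ t) (V i (γ t)) :=
      fun i => congrArg (fun p => tangentCoordChange (𝓡 d) p x₀ p (V i p)) hli
    rw [hZθ, Finset.smul_sum]
    refine Eq.trans ?_ (map_sum (tangentCoordChange (𝓡 d) (γ t) x₀ (γ t))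
      (fun i => (r * θ i) • V i (γ t)) Finset.univ).symm
    exact Finset.sum_congr rfl fun i _ => (congrArg (fun w => r • θ i • w) (hZeq i)).trans
      ((smul_smul r (θ i) _).trans
        ((tangentCoordChange (𝓡 d) (γ t) x₀ (γ t)).map_smul (r * θ i) (V i (γ t))).symm)
  -- the curve stays inside the chart ball on [0,1]
  set P : ℝ → Prop := fun t => γ t ∈ f.source ∧ f (γ t) ∈ Metric.closedBall (f x₀) ρ with hP
  have claim1 : ∀ t ∈ Icc (0:ℝ) 1, (∀ s ∈ Icc 0 t, P s) →
      ∀ s ∈ Icc 0 t, f (γ s) ∈ Metric.closedBall (f x₀) (3/4 * ρ) := by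
    intro t ht hPs s hs
    have h0t : (0:ℝ) ∈ Icc (0:ℝ) t := ⟨le_rfl, hs.1.trans hs.2⟩
    have hsub : Icc (0:ℝ) t ⊆ Icc (0:ℝ) 1 := Icc_subset_Icc le_rfl ht.2
    have hder : ∀ s' ∈ Icc (0:ℝ) t, HasDerivWithinAt (f ∘ γ) (r • Zθ (f (γ s'))) (Icc 0 t) s' :=
      fun s' hs' => (h1' s' (hsub hs') (hPs s' hs').1).hasDerivWithinAt
    have hbd : ∀ s' ∈ Icc (0:ℝ) t, ‖r • Zθ (f (γ s'))‖ ≤ r * C := by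
      intro s' hs'
      rw [norm_smul, Real.norm_eq_abs, abs_of_pos hr0]
      exact mul_le_mul_of_nonneg_left (hZθbdd _ (hPs s' hs').2) hr0.le
    have hmvt := (convex_Icc (0:ℝ) t).norm_image_sub_le_of_norm_hasDerivWithin_le hder hbd h0t hs
    have hs1 : ‖s - 0‖ ≤ 1 := by
      rw [sub_zero, Real.norm_eq_abs, abs_of_nonneg hs.1]
      exact hs.2.trans ht.2
    have hmvt2 : ‖(f ∘ γ) s - (f ∘ γ) 0‖ ≤ ρ/4 := by
      calc ‖(f ∘ γ) s - (f ∘ γ) 0‖ ≤ r * C * ‖s - 0‖ := hmvt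
        _ ≤ r * C * 1 := by
            apply mul_le_mul_of_nonneg_left hs1 (by positivity)
        _ ≤ ρ/4 := by rw [mul_one]; exact hrC
    rw [Metric.mem_closedBall]
    have hd1 : dist (f (γ s)) (f (γ 0)) ≤ ρ/4 := by
      rw [dist_eq_norm]; exact hmvt2
    have hd2 : dist (f (γ 0)) (f x₀) < ρ/2 := by rw [hγ0]; exact Metric.mem_ball.mp hxball
    calc dist (f (γ s)) (f x₀) ≤ dist (f (γ s)) (f (γ 0)) + dist (f (γ 0)) (f x₀) :=
          dist_triangle _ _ _
      _ ≤ 3/4 * ρ := by linarith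
  have hP0 : P 0 := by
    refine ⟨by rw [hγ0]; exact hxsrc, ?_⟩
    rw [hγ0, Metric.mem_closedBall]
    have := Metric.mem_ball.mp hxball
    linarith
  set A : Set ℝ := {t | t ∈ Icc (0:ℝ) 1 ∧ ∀ s ∈ Icc 0 t, P s} with hA
  have h0A : (0:ℝ) ∈ A := ⟨⟨le_rfl, zero_le_one⟩, by
    intro s hs
    have hs0 : s = 0 := le_antisymm hs.2 hs.1
    rwa [hs0]⟩
  have hAbdd : BddAbove A := ⟨1, fun t ht => ht.1.2⟩
  set T := sSup A with hT
  have hTmem : T ∈ Icc (0:ℝ) 1 := ⟨le_csSup hAbdd h0A, csSup_le ⟨0, h0A⟩ fun t ht => ht.1.2⟩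
  have hPlt : ∀ s, 0 ≤ s → s < T → P s := by
    intro s hs0 hsT
    obtain ⟨t, htA, hst⟩ := exists_lt_of_lt_csSup ⟨0, h0A⟩ hsT
    exact htA.2 s ⟨hs0, hst.le⟩
  have hPT : P T ∧ f (γ T) ∈ Metric.closedBall (f x₀) (3/4 * ρ) := by
    rcases eq_or_lt_of_le hTmem.1 with h0T | h0T
    · refine ⟨by rw [← h0T]; exact hP0, ?_⟩
      rw [← h0T, hγ0, Metric.mem_closedBall]
      have := Metric.mem_ball.mp hxball
      linarith
    · have hKc : IsCompact (f.symm '' Metric.closedBall (f x₀) (3/4*ρ)) := by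
        apply (isCompact_closedBall _ _).image_of_continuousOn
        apply (continuousOn_extChartAt_symm x₀).mono
        exact (Metric.closedBall_subset_closedBall (by linarith)).trans hρtgt
      have himg : ∀ s ∈ Ico (0:ℝ) T, γ s ∈ f.symm '' Metric.closedBall (f x₀) (3/4*ρ) := by
        intro s hs
        have hPs : ∀ s' ∈ Icc (0:ℝ) s, P s' := fun s' hs' =>
          hPlt s' hs'.1 (lt_of_le_of_lt hs'.2 hs.2)
        have hfs := claim1 s ⟨hs.1, hs.2.le.trans hTmem.2⟩ hPs s ⟨hs.1, le_rfl⟩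
        exact ⟨f (γ s), by exact_mod_cast hfs, f.left_inv (hPs s ⟨hs.1, le_rfl⟩).1⟩
      have hγT : γ T ∈ f.symm '' Metric.closedBall (f x₀) (3/4*ρ) := by
        have hcont : ContinuousWithinAt γ (Ico 0 T) T :=
          (hγ T hTmem).continuousAt.continuousWithinAt
        have hTcl : T ∈ closure (Ico (0:ℝ) T) := by
          rw [closure_Ico h0T.ne]
          exact ⟨hTmem.1, le_rfl⟩
        have := hcont.mem_closure_image hTcl
        refine closure_minimal ?_ hKc.isClosed this
        exact image_subset_iff.mpr himg
      obtain ⟨w, hw, hww⟩ := hγT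
      have hwtgt : w ∈ f.target := hρtgt (Metric.closedBall_subset_closedBall (by linarith) hw)
      have hsrcT : γ T ∈ f.source := by rw [← hww]; exact f.map_target hwtgt
      have hfT : f (γ T) = w := by rw [← hww]; exact f.right_inv hwtgt
      refine ⟨⟨hsrcT, ?_⟩, ?_⟩
      · rw [hfT]; exact Metric.closedBall_subset_closedBall (by linarith) hw
      · rw [hfT]; exact hw
  have hT1 : T = 1 := by
    by_contra hne
    have hTlt : T < 1 := lt_of_le_of_ne hTmem.2 hne
    have hO : IsOpen (f.source ∩ f ⁻¹' Metric.ball (f x₀) ρ) :=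
      (continuousOn_extChartAt (I := 𝓡 d) x₀).isOpen_inter_preimage
        (isOpen_extChartAt_source x₀) Metric.isOpen_ball
    have hγTO : γ T ∈ f.source ∩ f ⁻¹' Metric.ball (f x₀) ρ := by
      refine ⟨hPT.1.1, ?_⟩
      have := Metric.mem_closedBall.mp hPT.2
      exact Metric.mem_ball.mpr (by linarith)
    have hnb : γ ⁻¹' (f.source ∩ f ⁻¹' Metric.ball (f x₀) ρ) ∈ nhds T :=
      (hγ T hTmem).continuousAt.preimage_mem_nhds (hO.mem_nhds hγTO)
    obtain ⟨ε, hε0, hε⟩ := Metric.mem_nhds_iff.mp hnb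
    set t' := min (T + ε/2) 1 with ht'
    have hTt' : T < t' := lt_min (by linarith) hTlt
    have ht'A : t' ∈ A := by
      refine ⟨⟨hTmem.1.trans hTt'.le, min_le_right _ _⟩, ?_⟩
      intro s hs
      rcases lt_or_ge s T with hsT | hsT
      · exact hPlt s hs.1 hsT
      rcases eq_or_lt_of_le hsT with hsT' | hsT'
      · rw [← hsT']; exact hPT.1
      have hsball : s ∈ Metric.ball T ε := by
        rw [Metric.mem_ball, Real.dist_eq, abs_of_pos (by linarith)]
        have h2 : s ≤ t' := hs.2
        have h3 : t' ≤ T + ε/2 := min_le_left _ _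
        linarith
      have hmem := hε hsball
      exact ⟨hmem.1, Metric.ball_subset_closedBall hmem.2⟩
    have := le_csSup hAbdd ht'A
    linarith
  have hP1 : ∀ s ∈ Icc (0:ℝ) 1, P s := by
    intro s hs
    rcases lt_or_eq_of_le hs.2 with h | h
    · exact hPlt s hs.1 (by rw [hT1]; exact h)
    · rw [h, ← hT1]; exact hPT.1
  have hball1 : ∀ s ∈ Icc (0:ℝ) 1, f (γ s) ∈ Metric.closedBall (f x₀) ρ :=
    fun s hs => (hP1 s hs).2
  -- the chart representation of the combined field at the starting point
  set v := Zθ (f x) with hvdef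
  have hvne : v ≠ 0 := by
    intro hv0
    apply hWx
    have hxx : x ∈ (extChartAt (𝓡 d) x).source := mem_extChartAt_source x
    have hZeqx : ∀ i, Z i (f x) = tangentCoordChange (𝓡 d) x x₀ x (V i x) :=
      fun i => congrArg (fun p => tangentCoordChange (𝓡 d) p x₀ p (V i p)) (f.left_inv hxsrc)
    have hveq : v = tangentCoordChange (𝓡 d) x x₀ x (∑ i, θ i • V i x : TangentSpace (𝓡 d) x) := by
      rw [hvdef, hZθ]
      refine Eq.trans ?_ (map_sum (tangentCoordChange (𝓡 d) x x₀ x) (fun i => θ i • V i x) Finset.univ).symm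
      exact Finset.sum_congr rfl fun i _ => (congrArg (θ i • ·) (hZeqx i)).trans
        ((tangentCoordChange (𝓡 d) x x₀ x).map_smul (θ i) (V i x)).symm
    have h2 := congrArg (fun w => tangentCoordChange (𝓡 d) x₀ x x w) (hveq.symm.trans hv0)
    simp only [map_zero] at h2
    exact (tangentCoordChange_self (I := 𝓡 d) (v := ∑ i, θ i • V i x) hxx).symm.trans
      ((tangentCoordChange_comp (I := 𝓡 d) (v := ∑ i, θ i • V i x) ⟨⟨hxx, hxsrc⟩, hxx⟩).symm.trans h2)
  have hvpos : 0 < ‖v‖ := norm_pos_iff.mpr hvne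
  have hderiv : ∀ t ∈ Icc (0:ℝ) 1, HasDerivAt (f ∘ γ) (r • Zθ (f (γ t))) t :=
    fun t ht => h1' t ht (hP1 t ht).1
  have hxballc : f x ∈ Metric.closedBall (f x₀) ρ := by
    rw [Metric.mem_closedBall]
    have := Metric.mem_ball.mp hxball
    linarith
  -- Gronwall estimate
  set φ : ℝ → EuclideanSpace ℝ (Fin d) := fun t => f (γ t) - f x with hφ
  have hφc : ContinuousOn φ (Icc (0:ℝ) 1) := fun t ht =>
    ((hderiv t ht).continuousAt.sub continuousAt_const).continuousWithinAt
  have hder' : ∀ t ∈ Ico (0:ℝ) 1, HasDerivWithinAt φ (r • Zθ (f (γ t))) (Ici t) t :=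
    fun t ht => ((hderiv t ⟨ht.1, ht.2.le⟩).sub_const (f x)).hasDerivWithinAt
  have hφ0 : ‖φ 0‖ ≤ 0 := by
    have : φ 0 = 0 := by rw [hφ]; simp [hγ0]
    rw [this, norm_zero]
  have hlipv : ∀ t ∈ Icc (0:ℝ) 1, ‖Zθ (f (γ t)) - v‖ ≤ L * ‖φ t‖ := by
    intro t ht
    rw [hvdef, hφ]
    exact hZθlip (f (γ t)) (hball1 t ht) (f x) hxballc
  have hboundε : ∀ t ∈ Ico (0:ℝ) 1, ‖r • Zθ (f (γ t))‖ ≤ (r * L) * ‖φ t‖ + r * ‖v‖ := by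
    intro t ht
    have ht' : t ∈ Icc (0:ℝ) 1 := ⟨ht.1, ht.2.le⟩
    rw [norm_smul, Real.norm_eq_abs, abs_of_pos hr0]
    have h2 : ‖Zθ (f (γ t))‖ ≤ L * ‖φ t‖ + ‖v‖ := by
      have h3 := hlipv t ht'
      have h4 : ‖Zθ (f (γ t))‖ ≤ ‖Zθ (f (γ t)) - v‖ + ‖v‖ := by
        have := norm_add_le (Zθ (f (γ t)) - v) v
        simpa using this
      linarith
    nlinarith
  have hgron := norm_le_gronwallBound_of_norm_deriv_right_le hφc hder' hφ0 hboundε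
  have hrL0 : 0 < r * L := mul_pos hr0 hL0
  have hgb : ∀ t ∈ Icc (0:ℝ) 1, ‖φ t‖ ≤ 3 * (r * ‖v‖) := by
    intro t ht
    have h2 := hgron t ht
    have h3 : gronwallBound 0 (r * L) (r * ‖v‖) (t - 0) ≤ 3 * (r * ‖v‖) := by
      apply aux_gronwall_le _ _ _ hrL0
      · have h4 : r * L * (t - 0) ≤ r * L * 1 :=
          mul_le_mul_of_nonneg_left (by linarith [ht.2]) hrL0.le
        rw [mul_one] at h4
        exact h4.trans hrL
      · linarith [ht.1]
      · linarith [ht.2]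
      · positivity
    exact h2.trans h3
  -- positivity of the derivative of the inner product with v
  have hpos : ∀ t ∈ Icc (0:ℝ) 1, 0 < ⟪v, r • Zθ (f (γ t))⟫ := by
    intro t ht
    rw [real_inner_smul_right]
    apply mul_pos hr0
    have hdecomp : Zθ (f (γ t)) = v + (Zθ (f (γ t)) - v) := by abel
    rw [hdecomp, inner_add_right, real_inner_self_eq_norm_sq]
    have h2 : |⟪v, Zθ (f (γ t)) - v⟫| ≤ ‖v‖ * ‖Zθ (f (γ t)) - v‖ := abs_real_inner_le_norm _ _
    have h3 : ‖Zθ (f (γ t)) - v‖ ≤ L * (3 * r * ‖v‖) := by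
      have := hlipv t ht
      have := hgb t ht
      nlinarith [norm_nonneg (φ t)]
    have h4 : L * (3 * r * ‖v‖) ≤ 3/8 * ‖v‖ := by nlinarith
    have h35 : ‖Zθ (f (γ t)) - v‖ ≤ 3/8 * ‖v‖ := h3.trans h4
    have h6 : ‖v‖ * ‖Zθ (f (γ t)) - v‖ ≤ ‖v‖ * (3/8 * ‖v‖) :=
      mul_le_mul_of_nonneg_left h35 (norm_nonneg v)
    have h5 : ⟪v, Zθ (f (γ t)) - v⟫ ≥ -(3/8 * ‖v‖ * ‖v‖) := by
      have h7 := neg_abs_le ⟪v, Zθ (f (γ t)) - v⟫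
      nlinarith
    nlinarith
  -- strict monotonicity of t ↦ ⟪v, f (γ t)⟫
  set g : ℝ → ℝ := fun t => ⟪v, f (γ t)⟫ with hg
  have hgderiv : ∀ t ∈ Icc (0:ℝ) 1, HasDerivAt g ⟪v, r • Zθ (f (γ t))⟫ t := by
    intro t ht
    have h2 := (hasDerivAt_const t v).inner ℝ (hderiv t ht)
    simpa using h2
  have hgmono : StrictMonoOn g (Icc (0:ℝ) 1) := by
    apply strictMonoOn_of_hasDerivWithinAt_pos (convex_Icc (0:ℝ) 1)
      (f' := fun t => ⟪v, r • Zθ (f (γ t))⟫)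
    · exact fun t ht => (hgderiv t ht).continuousAt.continuousWithinAt
    · intro t ht
      rw [interior_Icc] at ht
      exact ((hgderiv t ⟨ht.1.le, ht.2.le⟩).hasDerivWithinAt)
    · intro t ht
      rw [interior_Icc] at ht
      exact hpos t ⟨ht.1.le, ht.2.le⟩
  intro hcon
  have h01 : g 0 < g 1 := hgmono ⟨le_rfl, zero_le_one⟩ ⟨zero_le_one, le_rfl⟩ zero_lt_one
  rw [hg] at h01
  simp only [hγ0, hcon] at h01
  exact lt_irrefl _ h01

/-- uniform lower bound on first-return times over a compact set.
Let `M` be a Hausdorff smooth manifold without boundary modeled on `ℝ^d`, let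
`V₁, …, V_N` be `C¹` vector fields on `M`, and let `K ⊆ M` be compact.  Then there is
`δ₀ > 0` such that for every unit vector `θ ∈ ℝ^N`, every `x ∈ K` at which
`∑ i, θ i • V i x ≠ 0`, and every `r ∈ (0, δ₀]`, the time-1 flow of
`r θ₁ V₁ + ⋯ + r θ_N V_N` starting at `x` (when it exists) does not return to `x`. -/
theorem exists_uniform_no_return_time
    (d : ℕ) (M : Type*) [TopologicalSpace M] [T2Space M]
    [ChartedSpace (EuclideanSpace ℝ (Fin d)) M]
    [IsManifold (𝓡 d) (⊤ : ℕ∞) M]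
    (N : ℕ) (V : Fin N → (Π x : M, TangentSpace (𝓡 d) x))
    (hV : ∀ i, ContMDiff (𝓡 d) (𝓡 d).tangent 1
      (fun x => (⟨x, V i x⟩ : TangentBundle (𝓡 d) M)))
    (K : Set M) (hK : IsCompact K) :
    ∃ δ₀ : ℝ, 0 < δ₀ ∧
      ∀ θ : Fin N → ℝ, (∑ i, (θ i) ^ 2) = 1 →
        ∀ x ∈ K, (∑ i, θ i • V i x) ≠ 0 →
          ∀ r ∈ Set.Ioc (0 : ℝ) δ₀,
            ∀ γ : ℝ → M, γ 0 = x →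
              (∀ t ∈ Set.Icc (0 : ℝ) 1, HasMFDerivAt 𝓘(ℝ, ℝ) (𝓡 d) γ t
                ((1 : ℝ →L[ℝ] ℝ).smulRight <| (fun y => ∑ i, (r * θ i) • V i y) (γ t))) →
              γ 1 ≠ x := by
  have hloc := fun x₀ : M => local_no_return d M N V hV x₀
  choose u hu hxu δ hδ hmain using hloc
  obtain ⟨t, hcov⟩ := hK.elim_nhds_subcover u (fun x _ => (hu x).mem_nhds (hxu x))
  rcases t.eq_empty_or_nonempty with rfl | hne
  · refine ⟨1, one_pos, ?_⟩
    intro θ hθ x hx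
    exfalso
    have := hcov.2 hx
    simpa using this
  · refine ⟨t.inf' hne δ, ?_, ?_⟩
    · rw [Finset.lt_inf'_iff]
      exact fun b _ => hδ b
    · intro θ hθ x hx hWx r hr γ hγ0 hγ
      have := hcov.2 hx
      rw [mem_iUnion₂] at this
      obtain ⟨y, hy, hxy⟩ := this
      exact hmain y θ hθ x hxy hWx r ⟨hr.1, hr.2.trans (Finset.inf'_le δ hy)⟩ γ hγ0 hγ
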